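/- The set of real numbers α > 1 such that the multiplicative submonoid B of ℝ generated by {(p² : ℝ) : p prime} ∪ {α} satisfies |x − y| ≥ 1 for all distinct x, y ∈ B, has Lebesgue measure zero. -/

import Mathlib

open MeasureTheory Filter Metric

private lemma natsq_mem_closure (G : Set ℝ)
    (hG : ∀ p : ℕ, p.Prime → ((p : ℝ) ^ 2) ∈ G) :
    ∀ k : ℕ, k ≠ 0 → ((k : ℝ) ^ 2) ∈ Submonoid.closure G := by
  intro k
  induction k using Nat.recOnMul with
  | zero => exact fun h => absurd rfl h
  | one => exact fun _ => by simpa using one_mem (Submonoid.closure G)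
  | prime p hp => exact fun _ => Submonoid.subset_closure (hG p hp)
  | mul a b ha hb =>
      intro hab
      have ha0 : a ≠ 0 := fun h => hab (by simp [h])
      have hb0 : b ≠ 0 := fun h => hab (by simp [h])
      have e : ((a * b : ℕ) : ℝ) ^ 2 = ((a : ℝ) ^ 2) * ((b : ℝ) ^ 2) := by
        push_cast; ring
      rw [e]
      exact mul_mem (ha ha0) (hb hb0)

/-- In an infinite set of good rational approximations, there are rationals with
arbitrarily large denominators. -/
private lemma exists_large_den (x : ℝ)
    (hx : {q : ℚ | |x - q| < 1 / (q.den : ℝ) ^ 2}.Infinite) (D : ℕ) :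
    ∃ q : ℚ, |x - (q : ℝ)| < 1 / (q.den : ℝ) ^ 2 ∧ D < q.den := by
  by_contra hcon
  push_neg at hcon
  apply hx
  set N : ℤ := ⌈(|x| + 1) * D⌉ with hN
  have hsub : {q : ℚ | |x - q| < 1 / (q.den : ℝ) ^ 2} ⊆
      (fun ab : ℤ × ℕ => (ab.1 : ℚ) / (ab.2 : ℚ)) '' (Set.Icc (-N, 0) (N, D)) := by
    intro q hq
    have hq' : |x - (q : ℝ)| < 1 / (q.den : ℝ) ^ 2 := hq
    have hden : q.den ≤ D := hcon q hq'
    have hd1 : (1 : ℝ) ≤ (q.den : ℝ) := by exact_mod_cast q.pos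
    have hq1 : |x - (q : ℝ)| < 1 := lt_of_lt_of_le hq' (by
      rw [div_le_one (by positivity)]; nlinarith)
    have habs : |(q : ℝ)| ≤ |x| + 1 := by
      have h1 := abs_sub_abs_le_abs_sub (q : ℝ) x
      rw [abs_sub_comm] at h1
      linarith
    have hnumval : (q.num : ℝ) = (q : ℝ) * (q.den : ℝ) := by
      rw [Rat.cast_def]; field_simp
    have hnum : |(q.num : ℝ)| ≤ (|x| + 1) * D := by
      rw [hnumval, abs_mul, abs_of_nonneg (by positivity : (0:ℝ) ≤ (q.den : ℝ))]
      have hDd : (q.den : ℝ) ≤ (D : ℝ) := by exact_mod_cast hden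
      have : (0:ℝ) ≤ |(q:ℝ)| := abs_nonneg _
      nlinarith
    have hNle : ((|x| + 1) * D : ℝ) ≤ (N : ℝ) := Int.le_ceil _
    have hup : q.num ≤ N := by
      have : (q.num : ℝ) ≤ (N : ℝ) := le_trans (le_trans (le_abs_self _) hnum) hNle
      exact_mod_cast this
    have hlo : -N ≤ q.num := by
      have : -(N : ℝ) ≤ (q.num : ℝ) := by
        have := neg_abs_le (q.num : ℝ)
        linarith
      exact_mod_cast this
    refine ⟨(q.num, q.den), ?_, ?_⟩
    · constructor
      · exact Prod.mk_le_mk.2 ⟨hlo, Nat.zero_le _⟩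
      · exact Prod.mk_le_mk.2 ⟨hup, hden⟩
    · simpa using Rat.num_div_den q
  exact ((Set.finite_Icc _ _).image _).subset hsub

/-- **Theorem 4 (Ruzsa), second part.** The set of reals `α > 1` for which the
multiplicative monoid generated by the prime squares together with `α` is `1`-separated
has Lebesgue measure zero. -/
theorem stmt_4 :
    volume {α : ℝ | 1 < α ∧
      ∀ x ∈ Submonoid.closure ({x : ℝ | ∃ p : ℕ, p.Prime ∧ x = (p : ℝ) ^ 2} ∪ {α}),
        ∀ y ∈ Submonoid.closure ({x : ℝ | ∃ p : ℕ, p.Prime ∧ x = (p : ℝ) ^ 2} ∪ {α}),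
          x ≠ y → 1 ≤ |x - y|} = 0 := by
  set B : Set ℝ := {x : ℝ | ∃ p : ℕ, p.Prime ∧ x = (p : ℝ) ^ 2} with hB
  have hBmem : ∀ p : ℕ, p.Prime → ((p : ℝ) ^ 2) ∈ B := fun p hp => ⟨p, hp, rfl⟩
  set T : Set ℝ := {α : ℝ | 1 < α ∧
      ∀ x ∈ Submonoid.closure (B ∪ {α}), ∀ y ∈ Submonoid.closure (B ∪ {α}),
        x ≠ y → 1 ≤ |x - y|} with hT
  set N₀ : Set ℝ := Set.range (fun r : ℚ => ((r : ℝ)) ^ 2) with hN₀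
  have hN0 : volume N₀ = 0 := (Set.countable_range _).measure_zero _
  set s : Set ℝ := T \ N₀ with hsdef
  -- every point of s fails to be a density point of s
  have hkey : ∀ α ∈ s,
      ¬ Tendsto (fun r => volume (s ∩ closedBall α r) / volume (closedBall α r))
        (nhdsWithin 0 (Set.Ioi 0)) (nhds 1) := by
    rintro α ⟨hαT, hαN⟩ hTend
    obtain ⟨hα1, hsep⟩ := hαT
    have hα0 : (0:ℝ) < α := lt_trans one_pos hα1
    set u : ℝ := Real.sqrt α with hu
    have hu2 : u ^ 2 = α := Real.sq_sqrt hα0.le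
    have hu1 : 1 < u := by nlinarith [Real.sqrt_nonneg α]
    have hirr : Irrational u := by
      rintro ⟨r, hr⟩
      exact hαN ⟨r, by show ((r:ℚ):ℝ)^2 = α; rw [hr]; exact hu2⟩
    set K : ℝ := 2 * u + 2 with hK
    have hK4 : (4:ℝ) ≤ K := by linarith
    have hKpos : (0:ℝ) < K := by linarith
    -- the key estimate for each good rational approximation q of √α
    have claim : ∀ q : ℚ, |u - (q : ℝ)| < 1 / (q.den : ℝ) ^ 2 →
        volume (s ∩ closedBall α (K / (q.den : ℝ) ^ 2)) /
          volume (closedBall α (K / (q.den : ℝ) ^ 2)) ≤ ENNReal.ofReal (1 - 1/K) := by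
      intro q hq
      set m : ℝ := (q.den : ℝ) with hm
      have hm1 : (1:ℝ) ≤ m := by rw [hm]; exact_mod_cast q.pos
      have hm0 : m ≠ 0 := by linarith
      set δ : ℝ := 1 / m ^ 2 with hδ
      have hδpos : 0 < δ := by positivity
      have hδ1 : δ ≤ 1 := by rw [hδ, div_le_one (by positivity)]; nlinarith
      have hqpos : (0:ℝ) < (q : ℝ) := by
        have h1 : u - (q:ℝ) < 1 := lt_of_le_of_lt (le_abs_self _) (lt_of_lt_of_le hq hδ1)
        linarith
      -- the "hole" around (q:ℝ)^2 misses s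
      have hole : ∀ β ∈ s, β ∉ Set.Ioo ((q:ℝ)^2 - δ) ((q:ℝ)^2 + δ) := by
        rintro β ⟨hβT, hβN⟩ ⟨hlo, hhi⟩
        obtain ⟨hβ1, hsepβ⟩ := hβT
        have hqnum : 0 < q.num := Rat.num_pos.2 (by exact_mod_cast hqpos)
        set n : ℕ := q.num.toNat with hn
        have hnz : (n : ℤ) = q.num := Int.toNat_of_nonneg hqnum.le
        have hn0 : n ≠ 0 := by
          intro h; rw [h] at hnz; omega
        have hcast : (q : ℝ) = (n : ℝ) / m := by
          rw [Rat.cast_def, hm]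
          congr 1
          exact_mod_cast congrArg (fun z : ℤ => (z : ℝ)) hnz.symm
        have hx : β * m ^ 2 ∈ Submonoid.closure (B ∪ {β}) := by
          refine mul_mem (Submonoid.subset_closure (Or.inr rfl)) ?_
          exact natsq_mem_closure _ (fun p hp => Or.inl (hBmem p hp)) q.den q.pos.ne'
        have hy : ((n : ℝ)) ^ 2 ∈ Submonoid.closure (B ∪ {β}) :=
          natsq_mem_closure _ (fun p hp => Or.inl (hBmem p hp)) n hn0
        have habs : |β - (q:ℝ)^2| < δ := abs_sub_lt_iff.2 ⟨by linarith, by linarith⟩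
        have hn2 : ((n : ℝ)) ^ 2 = (q:ℝ)^2 * m^2 := by
          rw [hcast]; field_simp
        by_cases heq : β * m ^ 2 = ((n : ℝ)) ^ 2
        · -- then β is the square of a rational, excluded
          have : β = ((q:ℚ) : ℝ) ^ 2 := by
            rw [hn2] at heq
            have hm2 : m ^ 2 ≠ 0 := pow_ne_zero _ hm0
            field_simp at heq
            exact heq
          exact hβN ⟨q, this.symm⟩
        · have h1le := hsepβ _ hx _ hy heq
          have hlt1 : |β * m ^ 2 - ((n : ℝ)) ^ 2| < 1 := by
            rw [hn2, show β * m^2 - (q:ℝ)^2 * m^2 = (β - (q:ℝ)^2) * m^2 by ring,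
              abs_mul, abs_of_nonneg (by positivity : (0:ℝ) ≤ m^2)]
            calc |β - (q:ℝ)^2| * m^2 < δ * m^2 :=
                  mul_lt_mul_of_pos_right habs (by positivity)
              _ = 1 := by rw [hδ]; field_simp
          linarith
      -- the hole sits inside the ball of radius K/m²
      have hsub : Set.Ioo ((q:ℝ)^2 - δ) ((q:ℝ)^2 + δ) ⊆ closedBall α (K / m ^ 2) := by
        intro t ht
        rw [mem_closedBall, Real.dist_eq]
        have e : (q:ℝ)^2 - α = ((q:ℝ) - u) * ((q:ℝ) + u) := by rw [← hu2]; ring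
        have hqu : (q:ℝ) + u ≤ 2*u + 1 := by
          have h1 : (q:ℝ) - u < 1 := by
            have := abs_sub_lt_iff.1 (lt_of_lt_of_le hq hδ1)
            linarith [this.2]
          linarith
        have h2 : |(q:ℝ)^2 - α| ≤ δ * (2*u + 1) := by
          rw [e, abs_mul]
          have hq' : |(q:ℝ) - u| ≤ δ := by
            rw [abs_sub_comm]; exact (lt_of_lt_of_le hq (le_of_eq rfl)).le
          have hpos2 : 0 < (q:ℝ) + u := by linarith
          rw [abs_of_pos hpos2]
          exact mul_le_mul hq' hqu (by linarith) hδpos.le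
        have h3 : |t - (q:ℝ)^2| ≤ δ := by
          obtain ⟨hl, hh⟩ := ht
          rw [abs_le]; constructor <;> linarith
        calc |t - α| ≤ |t - (q:ℝ)^2| + |(q:ℝ)^2 - α| := abs_sub_le _ _ _
          _ ≤ δ + δ * (2*u + 1) := add_le_add h3 h2
          _ = K * δ := by rw [hK]; ring
          _ = K / m ^ 2 := by rw [hδ]; ring
      -- measure estimate
      have hμball : volume (closedBall α (K / m ^ 2)) = ENNReal.ofReal (2 * (K / m ^ 2)) := by
        rw [Real.volume_closedBall]
      have hμH : volume (Set.Ioo ((q:ℝ)^2 - δ) ((q:ℝ)^2 + δ)) = ENNReal.ofReal (2 * δ) := by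
        rw [Real.volume_Ioo]; congr 1; ring
      have hdisj : s ∩ closedBall α (K / m ^ 2) ⊆
          closedBall α (K / m ^ 2) \ Set.Ioo ((q:ℝ)^2 - δ) ((q:ℝ)^2 + δ) := by
        rintro β ⟨hβs, hβb⟩
        exact ⟨hβb, fun hH => hole β hβs hH⟩
      have hmain : volume (s ∩ closedBall α (K / m ^ 2)) ≤
          ENNReal.ofReal (1 - 1/K) * volume (closedBall α (K / m ^ 2)) := by
        calc volume (s ∩ closedBall α (K / m ^ 2))
            ≤ volume (closedBall α (K / m ^ 2) \ Set.Ioo ((q:ℝ)^2 - δ) ((q:ℝ)^2 + δ)) :=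
              measure_mono hdisj
          _ = volume (closedBall α (K / m ^ 2)) -
                volume (Set.Ioo ((q:ℝ)^2 - δ) ((q:ℝ)^2 + δ)) :=
              measure_diff hsub measurableSet_Ioo.nullMeasurableSet
                (by rw [hμH]; exact ENNReal.ofReal_ne_top)
          _ = ENNReal.ofReal (2 * (K / m ^ 2)) - ENNReal.ofReal (2 * δ) := by
              rw [hμball, hμH]
          _ = ENNReal.ofReal (2 * (K / m ^ 2) - 2 * δ) :=
              (ENNReal.ofReal_sub _ (by positivity)).symm
          _ = ENNReal.ofReal ((1 - 1/K) * (2 * (K / m ^ 2))) := by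
              congr 1; rw [hδ]; field_simp
          _ = ENNReal.ofReal (1 - 1/K) * ENNReal.ofReal (2 * (K / m ^ 2)) :=
              ENNReal.ofReal_mul (by
                have : 1/K ≤ 1 := by rw [div_le_one hKpos]; linarith
                linarith)
          _ = ENNReal.ofReal (1 - 1/K) * volume (closedBall α (K / m ^ 2)) := by
              rw [hμball]
      exact ENNReal.div_le_of_le_mul hmain
    -- derive a contradiction with the density limit
    have hc1 : ENNReal.ofReal (1 - 1/K) < 1 := by
      rw [ENNReal.ofReal_lt_one]
      have : 0 < 1/K := by positivity
      linarith
    have hev : ∀ᶠ r in nhdsWithin 0 (Set.Ioi 0), ENNReal.ofReal (1 - 1/K) <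
        volume (s ∩ closedBall α r) / volume (closedBall α r) :=
      hTend.eventually (lt_mem_nhds hc1)
    have hfreq : ∃ᶠ r in nhdsWithin (0:ℝ) (Set.Ioi 0),
        volume (s ∩ closedBall α r) / volume (closedBall α r) ≤
          ENNReal.ofReal (1 - 1/K) := by
      rw [Filter.frequently_iff]
      intro U hU
      obtain ⟨v, hv, hsubU⟩ := mem_nhdsGT_iff_exists_Ioo_subset.1 hU
      have hv0 : (0:ℝ) < v := hv
      obtain ⟨q, hq, hden⟩ := exists_large_den u
        (Real.infinite_rat_abs_sub_lt_one_div_den_sq_of_irrational hirr) ⌈Real.sqrt (K/v)⌉₊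
      have hdenR : Real.sqrt (K/v) < (q.den : ℝ) :=
        lt_of_le_of_lt (Nat.le_ceil _) (by exact_mod_cast hden)
      have h2 : K / v < ((q.den : ℝ)) ^ 2 := Real.lt_sq_of_sqrt_lt hdenR
      have hd0 : (0:ℝ) < (q.den : ℝ) := by exact_mod_cast q.pos
      have hrv : K / (q.den : ℝ) ^ 2 < v := by
        rw [div_lt_iff₀ (by positivity)]
        have := (div_lt_iff₀ hv0).1 h2
        nlinarith
      exact ⟨K / (q.den : ℝ) ^ 2, hsubU ⟨by positivity, hrv⟩, claim q hq⟩
    obtain ⟨r, hle, hlt⟩ := (hfreq.and_eventually hev).exists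
    exact absurd hlt (not_lt.2 hle)
  -- conclude using the Lebesgue density theorem (Besicovitch version)
  have hs0 : volume s = 0 := by
    refine le_antisymm ?_ (zero_le)
    have hae := Besicovitch.ae_tendsto_measure_inter_div (volume : Measure ℝ) s
    rw [Filter.eventually_iff, mem_ae_iff] at hae
    calc volume s = (volume.restrict s) s := (Measure.restrict_apply_self _ _).symm
      _ ≤ (volume.restrict s) {x | Tendsto
            (fun r => volume (s ∩ closedBall x r) / volume (closedBall x r))
            (nhdsWithin 0 (Set.Ioi 0)) (nhds 1)}ᶜ :=
          measure_mono (fun x hx => hkey x hx)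
      _ = 0 := hae
  have hTsub : T ⊆ s ∪ N₀ := fun x hx =>
    (em (x ∈ N₀)).elim Or.inr (fun h => Or.inl ⟨hx, h⟩)
  exact measure_mono_null hTsub (measure_union_null hs0 hN0)
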